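/- arXiv:1910.13064 — 2 statements merged into one kernel-verified Lean document; each statement's English description precedes it below -/
import Mathlib

section
/- Let α > 0 and let φ : [0,∞) → [0,∞) be continuously differentiable, strictly increasing, with φ(0) = 0 and lim_{r→0+} φ(r)/r^α = 0. Suppose there exist a function ψ : [1,∞) → (0,∞) with ψ(p) ≤ p for all p and ψ(p) → ∞ as p → ∞, and a number p₀ ≥ 1 such that (φ^{−1}(t/p))^α ≤ ψ(p)^{−1} (φ^{−1}(t))^α for all p ≥ p₀ and all t in the interval [0, sup_{r≥0} φ(r)). Then for every R' > 0 there exists p₁ ≥ 1 such that for all p ≥ p₁, ∫₀^{R'} (1 − e^{−pφ(r)}) r^{−1−α} dr ≥ ψ(p) ∫₀^{R'} (1 − e^{−φ(r)}) r^{−1−α} dr, as an inequality in [0,∞]. -/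
open MeasureTheory Real ENNReal Filter

lemma aux_exp (a : ℝ) (ha : 0 ≤ a) :
    ENNReal.ofReal (1 - Real.exp (-a)) = ∫⁻ s in Set.Ioc 0 a, ENNReal.ofReal (Real.exp (-s)) := by
  rw [← MeasureTheory.ofReal_integral_eq_lintegral_ofReal]
  · congr 1
    rw [← intervalIntegral.integral_of_le ha]
    have h := intervalIntegral.integral_comp_neg (a := (0:ℝ)) (b := a) (fun x => Real.exp x)
    rw [h, integral_exp]
    simp
  · exact (Real.continuous_exp.comp continuous_neg).integrableOn_Ioc
  · exact Filter.Eventually.of_forall fun s => (Real.exp_pos _).le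

lemma aux_inner (a wr : ℝ) (ha : 0 ≤ a) :
    ∫⁻ s in Set.Ioi (0:ℝ), (Set.Iic a).indicator (fun s => ENNReal.ofReal (Real.exp (-s) * wr)) s
      = ENNReal.ofReal ((1 - Real.exp (-a)) * wr) := by
  rw [lintegral_indicator measurableSet_Iic, Measure.restrict_restrict measurableSet_Iic,
    Set.inter_comm, Set.Ioi_inter_Iic]
  have h1 : ∀ s : ℝ, ENNReal.ofReal (Real.exp (-s) * wr)
      = ENNReal.ofReal (Real.exp (-s)) * ENNReal.ofReal wr :=
    fun s => ENNReal.ofReal_mul (Real.exp_nonneg _)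
  simp only [h1]
  have he1 : Real.exp (-a) ≤ 1 := by
    rw [← Real.exp_zero]; exact Real.exp_le_exp.2 (by linarith)
  rw [lintegral_mul_const' _ _ ENNReal.ofReal_ne_top, ← aux_exp a ha,
    ← ENNReal.ofReal_mul (by linarith)]

lemma aux_rpow (α : ℝ) (hα : 0 < α) (ρ R' : ℝ) (hρ : 0 < ρ) (hρR : ρ ≤ R') :
    ∫⁻ r in Set.Icc ρ R', ENNReal.ofReal (r ^ (-1 - α)) =
      ENNReal.ofReal ((ρ ^ (-α) - R' ^ (-α)) / α) := by
  rw [← Measure.restrict_congr_set Ioc_ae_eq_Icc]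
  rw [← MeasureTheory.ofReal_integral_eq_lintegral_ofReal]
  · congr 1
    rw [← intervalIntegral.integral_of_le hρR, integral_rpow]
    · rw [show (-1:ℝ) - α + 1 = -α by ring, div_neg, ← neg_div, neg_sub]
    · right
      constructor
      · intro h; exfalso; nlinarith
      · rw [Set.uIcc_of_le hρR]
        intro h; exact absurd h.1 (not_le.2 hρ)
  · apply MeasureTheory.IntegrableOn.mono_set _ Set.Ioc_subset_Icc_self
    apply ContinuousOn.integrableOn_Icc
    intro x hx
    exact (Real.continuousAt_rpow_const x _ (Or.inl (ne_of_gt (lt_of_lt_of_le hρ hx.1)))).continuousWithinAt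
  · refine (ae_restrict_iff' measurableSet_Ioc).2 (Filter.Eventually.of_forall fun s hs => ?_)
    exact Real.rpow_nonneg (le_of_lt (lt_trans hρ hs.1)) _

/-- Under condition (2.8) of the paper on `φ⁻¹`, for every `R' > 0` and all large `p`,
`∫₀^{R'} (1 − e^{−pφ(r)}) r^{−1−α} dr ≥ ψ(p) ∫₀^{R'} (1 − e^{−φ(r)}) r^{−1−α} dr`
as an inequality in `[0,∞]`. -/
theorem stmt3 (α : ℝ) (hα : 0 < α) (φ : ℝ → ℝ)
    (hφ0 : ∀ r ∈ Set.Ici (0 : ℝ), 0 ≤ φ r)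
    (hφC1 : ContDiffOn ℝ 1 φ (Set.Ici (0 : ℝ)))
    (hφmono : StrictMonoOn φ (Set.Ici (0 : ℝ)))
    (hφzero : φ 0 = 0)
    (hφlittleo : Filter.Tendsto (fun r => φ r / r ^ α) (nhdsWithin 0 (Set.Ioi 0)) (nhds 0))
    (φinv : ℝ → ℝ)
    (hinv1 : ∀ t ∈ Set.Ici (0 : ℝ), φinv (φ t) = t)
    (hinv2 : ∀ s ∈ φ '' Set.Ici (0 : ℝ), φ (φinv s) = s)
    (ψ : ℝ → ℝ) (hψpos : ∀ p ≥ (1 : ℝ), 0 < ψ p) (hψle : ∀ p ≥ (1 : ℝ), ψ p ≤ p)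
    (hψtop : Filter.Tendsto ψ Filter.atTop Filter.atTop)
    (p₀ : ℝ) (hp₀ : 1 ≤ p₀)
    (hphiinv : ∀ p ≥ p₀, ∀ t : ℝ, 0 ≤ t → (∃ r ≥ (0 : ℝ), t < φ r) →
      (φinv (t / p)) ^ α ≤ (ψ p)⁻¹ * (φinv t) ^ α)
    (R' : ℝ) (hR' : 0 < R') :
    ∃ p₁ ≥ (1 : ℝ), ∀ p ≥ p₁,
      ENNReal.ofReal (ψ p) *
          ∫⁻ r in Set.Ioc (0 : ℝ) R',
            ENNReal.ofReal ((1 - Real.exp (-φ r)) * r ^ (-1 - α))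
        ≤ ∫⁻ r in Set.Ioc (0 : ℝ) R',
            ENNReal.ofReal ((1 - Real.exp (-(p * φ r))) * r ^ (-1 - α)) := by
  classical
  -- extend φ continuously to all of ℝ
  set Φ : ℝ → ℝ := fun r => φ (max r 0) with hΦdef
  have hΦcont : Continuous Φ :=
    (hφC1.continuousOn).comp_continuous (continuous_id.max continuous_const)
      (fun x => Set.mem_Ici.2 (le_max_right x 0))
  have hΦeq : ∀ r : ℝ, 0 ≤ r → Φ r = φ r := by
    intro r hr
    simp only [hΦdef, max_eq_left hr]
  have hΦ0 : ∀ r, 0 ≤ Φ r := fun r => hφ0 _ (Set.mem_Ici.2 (le_max_right r 0))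
  -- eventually ψ ≥ 1
  obtain ⟨N, hN⟩ := Filter.eventually_atTop.1 (hψtop.eventually_ge_atTop 1)
  -- the inner r-integral as a function of the level s
  set K : ℝ → ℝ → ℝ≥0∞ := fun c s =>
      ∫⁻ r in Set.Ioc 0 R' ∩ {r | s ≤ c * Φ r}, ENNReal.ofReal (r ^ (-1 - α)) with hK
  have hS1meas : ∀ c s : ℝ, MeasurableSet {r : ℝ | s ≤ c * Φ r} := fun c s =>
    (isClosed_le continuous_const (continuous_const.mul hΦcont)).measurableSet
  have hgmeas : Measurable (fun q : ℝ × ℝ => ENNReal.ofReal (Real.exp (-q.2) * q.1 ^ (-1 - α))) := by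
    apply Measurable.ennreal_ofReal
    exact ((Real.continuous_exp.comp continuous_neg).comp continuous_snd).measurable.mul
      (measurable_fst.pow measurable_const)
  -- the layer-cake + Fubini identity
  have hJ : ∀ c : ℝ, 0 ≤ c →
      (∫⁻ r in Set.Ioc 0 R', ENNReal.ofReal ((1 - Real.exp (-(c * φ r))) * r ^ (-1 - α)))
        = ∫⁻ s in Set.Ioi (0:ℝ), ENNReal.ofReal (Real.exp (-s)) * K c s := by
    intro c hc
    have hSmeas : MeasurableSet {q : ℝ × ℝ | q.2 ≤ c * Φ q.1} :=
      (isClosed_le continuous_snd (continuous_const.mul (hΦcont.comp continuous_fst))).measurableSet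
    have step1 : (∫⁻ r in Set.Ioc 0 R', ENNReal.ofReal ((1 - Real.exp (-(c * φ r))) * r ^ (-1 - α)))
        = ∫⁻ r in Set.Ioc 0 R', ∫⁻ s in Set.Ioi (0:ℝ),
            {q : ℝ × ℝ | q.2 ≤ c * Φ q.1}.indicator
              (fun q => ENNReal.ofReal (Real.exp (-q.2) * q.1 ^ (-1 - α))) (r, s) := by
      apply setLIntegral_congr_fun measurableSet_Ioc
      intro r hr
      have hind : ∀ s : ℝ, {q : ℝ × ℝ | q.2 ≤ c * Φ q.1}.indicator
              (fun q => ENNReal.ofReal (Real.exp (-q.2) * q.1 ^ (-1 - α))) (r, s)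
          = (Set.Iic (c * Φ r)).indicator
              (fun s => ENNReal.ofReal (Real.exp (-s) * r ^ (-1 - α))) s := by
        intro s
        simp only [Set.indicator_apply, Set.mem_setOf_eq, Set.mem_Iic]
      simp only [hind]
      rw [aux_inner _ _ (mul_nonneg hc (hΦ0 r)), hΦeq r hr.1.le]
    rw [step1]
    rw [MeasureTheory.lintegral_lintegral_swap
      (f := fun r s => {q : ℝ × ℝ | q.2 ≤ c * Φ q.1}.indicator
        (fun q => ENNReal.ofReal (Real.exp (-q.2) * q.1 ^ (-1 - α))) (r, s))
      ((hgmeas.indicator hSmeas).aemeasurable)]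
    -- now rewrite inner integral
    apply lintegral_congr_ae
    apply Filter.Eventually.of_forall
    intro s
    have hind2 : ∀ r : ℝ, {q : ℝ × ℝ | q.2 ≤ c * Φ q.1}.indicator
            (fun q => ENNReal.ofReal (Real.exp (-q.2) * q.1 ^ (-1 - α))) (r, s)
        = ENNReal.ofReal (Real.exp (-s)) *
            ({r : ℝ | s ≤ c * Φ r}.indicator (fun r => ENNReal.ofReal (r ^ (-1 - α))) r) := by
      intro r
      simp only [Set.indicator_apply, Set.mem_setOf_eq]
      split_ifs with h
      · exact ENNReal.ofReal_mul (Real.exp_nonneg _)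
      · rw [mul_zero]
    simp only [hind2]
    rw [lintegral_const_mul' _ _ ENNReal.ofReal_ne_top,
      lintegral_indicator (hS1meas c s), Measure.restrict_restrict (hS1meas c s), Set.inter_comm]
  -- key pointwise comparison
  have hkey : ∀ p, max p₀ N ≤ p → ∀ s : ℝ, 0 < s →
      ENNReal.ofReal (ψ p) * K 1 s ≤ K p s := by
    intro p hp s hs
    have hpp₀ : p₀ ≤ p := le_trans (le_max_left _ _) hp
    have hp1 : (1:ℝ) ≤ p := le_trans hp₀ hpp₀
    have hψ1 : (1:ℝ) ≤ ψ p := hN p (le_trans (le_max_right _ _) hp)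
    have hψp : (0:ℝ) < ψ p := hψpos p hp1
    by_cases hcase : s ≤ φ R'
    · -- main case : use the φinv hypothesis
      have hconthy : ContinuousOn φ (Set.Icc 0 R') :=
        (hφC1.continuousOn).mono (Set.Icc_subset_Ici_self)
      have hIVT := intermediate_value_Icc hR'.le hconthy
      -- ρ₁
      obtain ⟨ρ₁, hρ₁mem, hρ₁⟩ : ∃ ρ ∈ Set.Icc (0:ℝ) R', φ ρ = s := by
        have : s ∈ Set.Icc (φ 0) (φ R') := ⟨by rw [hφzero]; exact hs.le, hcase⟩
        exact hIVT this
      have hρ₁pos : 0 < ρ₁ := by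
        rcases lt_or_eq_of_le hρ₁mem.1 with h | h
        · exact h
        · exfalso; rw [← h, hφzero] at hρ₁; exact absurd hρ₁ (ne_of_lt hs)
      have hinvρ₁ : φinv s = ρ₁ := by rw [← hρ₁]; exact hinv1 ρ₁ hρ₁mem.1
      -- ρₚ
      have hsp_pos : 0 < s / p := div_pos hs (by linarith)
      have hsp_le : s / p ≤ φ R' := le_trans (div_le_self hs.le hp1) hcase
      obtain ⟨ρₚ, hρₚmem, hρₚ⟩ : ∃ ρ ∈ Set.Icc (0:ℝ) R', φ ρ = s / p := by
        have : s / p ∈ Set.Icc (φ 0) (φ R') := ⟨by rw [hφzero]; exact hsp_pos.le, hsp_le⟩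
        exact hIVT this
      have hρₚpos : 0 < ρₚ := by
        rcases lt_or_eq_of_le hρₚmem.1 with h | h
        · exact h
        · exfalso; rw [← h, hφzero] at hρₚ; exact absurd hρₚ (ne_of_lt hsp_pos)
      have hinvρₚ : φinv (s / p) = ρₚ := by rw [← hρₚ]; exact hinv1 ρₚ hρₚmem.1
      -- the condition (2.8)
      have hAA := hphiinv p hpp₀ s hs.le
        ⟨R' + 1, by linarith, lt_of_le_of_lt hcase
          (hφmono (Set.mem_Ici.2 hR'.le) (Set.mem_Ici.2 (by linarith)) (by linarith))⟩
      rw [hinvρ₁, hinvρₚ] at hAA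
      -- set identification
      have hset : ∀ c ρ : ℝ, 0 < ρ → ρ ≤ R' → 0 < c → c * φ ρ = s →
          Set.Ioc 0 R' ∩ {r | s ≤ c * Φ r} = Set.Icc ρ R' := by
        intro c ρ hρ hρR hc hφρ
        ext r
        simp only [Set.mem_inter_iff, Set.mem_Ioc, Set.mem_setOf_eq, Set.mem_Icc]
        constructor
        · rintro ⟨⟨hr0, hrR⟩, hsr⟩
          refine ⟨?_, hrR⟩
          rw [hΦeq r hr0.le] at hsr
          have hφle : φ ρ ≤ φ r := by
            rw [← hφρ] at hsr
            exact le_of_mul_le_mul_left hsr hc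
          exact (hφmono.le_iff_le (Set.mem_Ici.2 hρ.le) (Set.mem_Ici.2 hr0.le)).1 hφle
        · rintro ⟨hρr, hrR⟩
          have hr0 : 0 < r := lt_of_lt_of_le hρ hρr
          refine ⟨⟨hr0, hrR⟩, ?_⟩
          rw [hΦeq r hr0.le, ← hφρ]
          have hφle : φ ρ ≤ φ r :=
            (hφmono.le_iff_le (Set.mem_Ici.2 hρ.le) (Set.mem_Ici.2 hr0.le)).2 hρr
          nlinarith
      have hK1 : K 1 s = ENNReal.ofReal ((ρ₁ ^ (-α) - R' ^ (-α)) / α) := by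
        rw [hK]
        simp only
        rw [hset 1 ρ₁ hρ₁pos hρ₁mem.2 one_pos (by rw [one_mul, hρ₁]),
          aux_rpow α hα ρ₁ R' hρ₁pos hρ₁mem.2]
      have hKp : K p s = ENNReal.ofReal ((ρₚ ^ (-α) - R' ^ (-α)) / α) := by
        rw [hK]
        simp only
        rw [hset p ρₚ hρₚpos hρₚmem.2 (by linarith)
            (by rw [hρₚ]; field_simp),
          aux_rpow α hα ρₚ R' hρₚpos hρₚmem.2]
      rw [hK1, hKp, ← ENNReal.ofReal_mul hψp.le]
      apply ENNReal.ofReal_le_ofReal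
      -- real inequality
      have hX : (0:ℝ) < ρ₁ ^ α := Real.rpow_pos_of_pos hρ₁pos α
      have hY : (0:ℝ) < ρₚ ^ α := Real.rpow_pos_of_pos hρₚpos α
      have hZ : (0:ℝ) < R' ^ α := Real.rpow_pos_of_pos hR' α
      have hAA' : ψ p * ρₚ ^ α ≤ ρ₁ ^ α := by
        have := mul_le_mul_of_nonneg_left hAA hψp.le
        rwa [← mul_assoc, mul_inv_cancel₀ (ne_of_gt hψp), one_mul] at this
      rw [Real.rpow_neg hρ₁pos.le, Real.rpow_neg hρₚpos.le, Real.rpow_neg hR'.le]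
      rw [← mul_div_assoc, div_le_div_iff₀ hα hα]
      have h1 : ψ p * (ρ₁ ^ α)⁻¹ ≤ (ρₚ ^ α)⁻¹ := by
        rw [← div_eq_mul_inv, ← one_div, div_le_div_iff₀ hX hY]
        nlinarith
      have h2 : (R' ^ α)⁻¹ ≤ ψ p * (R' ^ α)⁻¹ :=
        le_mul_of_one_le_left (inv_nonneg.2 hZ.le) hψ1
      have : ψ p * ((ρ₁ ^ α)⁻¹ - (R' ^ α)⁻¹) ≤ (ρₚ ^ α)⁻¹ - (R' ^ α)⁻¹ := by
        rw [mul_sub]; linarith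
      exact mul_le_mul_of_nonneg_right this hα.le
    · -- trivial case : K 1 s = 0
      have hempty : Set.Ioc 0 R' ∩ {r : ℝ | s ≤ 1 * Φ r} = ∅ := by
        ext r
        simp only [Set.mem_inter_iff, Set.mem_Ioc, Set.mem_setOf_eq, Set.mem_empty_iff_false,
          iff_false, not_and, one_mul]
        rintro ⟨hr0, hrR⟩
        rw [hΦeq r hr0.le]
        push_neg at hcase ⊢
        rcases eq_or_lt_of_le hrR with h | h
        · rw [h]; exact hcase
        · exact lt_trans (hφmono (Set.mem_Ici.2 hr0.le) (Set.mem_Ici.2 hR'.le) h) hcase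
      have : K 1 s = 0 := by
        rw [hK]; simp only
        rw [hempty, Measure.restrict_empty, lintegral_zero_measure]
      rw [this, mul_zero]
      exact zero_le
  -- assemble
  refine ⟨max p₀ N, le_trans hp₀ (le_max_left _ _), ?_⟩
  intro p hp
  have hp1 : (1:ℝ) ≤ p := le_trans (le_trans hp₀ (le_max_left _ _)) hp
  have h1 := hJ 1 zero_le_one
  simp only [one_mul] at h1
  rw [h1, hJ p (by linarith)]
  rw [← lintegral_const_mul' _ _ ENNReal.ofReal_ne_top]
  apply lintegral_mono_ae
  filter_upwards [ae_restrict_mem measurableSet_Ioi] with s hs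
  rw [mul_left_comm]
  exact mul_le_mul_right (hkey p hp s hs) _
end

section
/- Let d ≥ 1 be an integer, 0 < α < 2, and R, R' > 0. Let φ : [0,∞) → [0,∞) be continuously differentiable, strictly increasing, with φ(0) = 0 and lim_{r→0+} φ(r)/r^α = 0, and suppose there exist ψ : [1,∞) → (0,∞) with ψ(p) ≤ p for all p and ψ(p) → ∞ as p → ∞, and p₀ ≥ 1, such that (φ^{−1}(t/p))^α ≤ ψ(p)^{−1} (φ^{−1}(t))^α for all p ≥ p₀ and all t ∈ [0, sup_{r≥0} φ(r)). Define F : ℝ^d × ℝ^d → [0,∞) by F(x,y) := (1/2) φ(|x−y|) · [ 1_{B(x,R')}(y) 1_{B(0,R)}(x) + 1_{B(y,R')}(x) 1_{B(0,R)}(y) + 1_{B(y,R')}(x) 1_{B(x,R')}(y) 1_{A}(x) 1_{A}(y) ], where A := B(0,R+R') \ B(0,R). Then there exists p₁ ≥ 1 such that for all p ≥ p₁ and all x ∈ ℝ^d, 𝐅^{(p)}1(x) ≥ (ψ(p)/2) · 𝐅1(x), as an inequality in [0,∞]. -/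
open MeasureTheory Real ENNReal

/-- The constant `C_{d,α} = α·2^(α−1)·π^(−d/2)·Γ((d+α)/2)·Γ(1−α/2)⁻¹`. -/
noncomputable def Cda (d : ℕ) (α : ℝ) : ℝ :=
  α * (2 : ℝ) ^ (α - 1) * Real.pi ^ (-(d : ℝ) / 2) *
    Real.Gamma (((d : ℝ) + α) / 2) / Real.Gamma (1 - α / 2)

/-- `𝐅^{(p)}1(x) = C_{d,α} ∫ (1 − e^{−pF(x,y)}) |x−y|^{−(d+α)} dy`, in `[0,∞]`. -/
noncomputable def Fp1 (d : ℕ) (α : ℝ)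
    (F : EuclideanSpace ℝ (Fin d) → EuclideanSpace ℝ (Fin d) → ℝ) (p : ℝ)
    (x : EuclideanSpace ℝ (Fin d)) : ℝ≥0∞ :=
  ENNReal.ofReal (Cda d α) *
    ∫⁻ y, ENNReal.ofReal ((1 - Real.exp (-(p * F x y))) * ‖x - y‖ ^ (-((d : ℝ) + α)))

/-- Layer-cake identity for `1 - e^{-u}`. -/
lemma layer_aux {u : ℝ} (hu : 0 ≤ u) :
    (∫⁻ s in Set.Ioi (0:ℝ), (Set.Iio u).indicator (fun s => ENNReal.ofReal (Real.exp (-s))) s)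
      = ENNReal.ofReal (1 - Real.exp (-u)) := by
  rw [lintegral_indicator measurableSet_Iio, Measure.restrict_restrict measurableSet_Iio]
  have hset : Set.Iio u ∩ Set.Ioi 0 = Set.Ioo 0 u := by
    ext t; simp [Set.mem_Ioo, and_comm]
  rw [hset]
  have hint : IntegrableOn (fun s => Real.exp (-s)) (Set.Ioo 0 u) := by
    exact ((Real.continuous_exp.comp continuous_neg).integrableOn_Icc).mono_set
      Set.Ioo_subset_Icc_self
  rw [← ofReal_integral_eq_lintegral_ofReal hint (ae_of_all _ fun t => (Real.exp_pos _).le)]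
  congr 1
  rw [← MeasureTheory.integral_Ioc_eq_integral_Ioo, ← intervalIntegral.integral_of_le hu]
  have h := intervalIntegral.integral_comp_neg (a := (0:ℝ)) (b := u) (fun v => Real.exp v)
  rw [h]
  simp [integral_exp]

/-- Change of variables under the homothety `z ↦ x + l•(z-x)` for lower integrals. -/
lemma scale_aux (n : ℕ) (x : EuclideanSpace ℝ (Fin n)) {l : ℝ} (hl : 0 < l)
    (g : EuclideanSpace ℝ (Fin n) → ℝ≥0∞) (hg : Measurable g) :
    ∫⁻ y, g y = ENNReal.ofReal (l ^ n) * ∫⁻ z, g (x + l • (z - x)) := by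
  have hsm : Measurable fun z : EuclideanSpace ℝ (Fin n) => l • z := measurable_const_smul l
  have h1 : (∫⁻ z, g (x + l • (z - x))) = ∫⁻ z, g ((x - l • x) + l • z) := by
    apply lintegral_congr; intro z
    congr 1
    rw [smul_sub]; abel
  have h2 : (∫⁻ z, g ((x - l • x) + l • z)) = ∫⁻ u, g ((x - l • x) + u)
      ∂(Measure.map (l • ·) volume) := by
    exact (lintegral_map (f := fun u => g ((x - l • x) + u))
      (hg.comp (measurable_const_add _)) hsm).symm
  rw [h1, h2, Measure.map_addHaar_smul volume (ne_of_gt hl), lintegral_smul_measure,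
    lintegral_add_left_eq_self (fun u => g u)]
  rw [finrank_euclideanSpace_fin]
  rw [abs_of_nonneg (inv_nonneg.2 (pow_nonneg hl.le _)), smul_eq_mul, ← mul_assoc,
    ← ENNReal.ofReal_mul (pow_nonneg hl.le _), mul_inv_cancel₀ (pow_ne_zero _ (ne_of_gt hl)),
    ENNReal.ofReal_one, one_mul]

set_option maxHeartbeats 1000000 in
/-- Example 2.3 of the paper: for the kernel `F` built from `φ(|x−y|)` and the balls
`B(0,R)`, `B(x,R')`, the non-local potentials satisfy `𝐅^{(p)}1 ≥ (ψ(p)/2)·𝐅1`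
for all large `p`. -/
theorem stmt4 (d : ℕ) (hd : 1 ≤ d) (α : ℝ) (hα0 : 0 < α) (hα2 : α < 2)
    (R R' : ℝ) (hR : 0 < R) (hR' : 0 < R')
    (φ : ℝ → ℝ)
    (hφ0 : ∀ r ∈ Set.Ici (0 : ℝ), 0 ≤ φ r)
    (hφC1 : ContDiffOn ℝ 1 φ (Set.Ici (0 : ℝ)))
    (hφmono : StrictMonoOn φ (Set.Ici (0 : ℝ)))
    (hφzero : φ 0 = 0)
    (hφlittleo : Filter.Tendsto (fun r => φ r / r ^ α) (nhdsWithin 0 (Set.Ioi 0)) (nhds 0))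
    (φinv : ℝ → ℝ)
    (hinv1 : ∀ t ∈ Set.Ici (0 : ℝ), φinv (φ t) = t)
    (hinv2 : ∀ s ∈ φ '' Set.Ici (0 : ℝ), φ (φinv s) = s)
    (ψ : ℝ → ℝ) (hψpos : ∀ p ≥ (1 : ℝ), 0 < ψ p) (hψle : ∀ p ≥ (1 : ℝ), ψ p ≤ p)
    (hψtop : Filter.Tendsto ψ Filter.atTop Filter.atTop)
    (p₀ : ℝ) (hp₀ : 1 ≤ p₀)
    (hphiinv : ∀ p ≥ p₀, ∀ t : ℝ, 0 ≤ t → (∃ r ≥ (0 : ℝ), t < φ r) →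
      (φinv (t / p)) ^ α ≤ (ψ p)⁻¹ * (φinv t) ^ α)
    (F : EuclideanSpace ℝ (Fin d) → EuclideanSpace ℝ (Fin d) → ℝ)
    (hFdef : ∀ x y, F x y = (1 / 2) * φ ‖x - y‖ *
      ((if ‖y - x‖ < R' then (1 : ℝ) else 0) * (if ‖x‖ < R then (1 : ℝ) else 0)
        + (if ‖x - y‖ < R' then (1 : ℝ) else 0) * (if ‖y‖ < R then (1 : ℝ) else 0)
        + (if ‖x - y‖ < R' then (1 : ℝ) else 0) * (if ‖y - x‖ < R' then (1 : ℝ) else 0)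
            * (if ‖x‖ < R + R' ∧ ¬ ‖x‖ < R then (1 : ℝ) else 0)
            * (if ‖y‖ < R + R' ∧ ¬ ‖y‖ < R then (1 : ℝ) else 0))) :
    ∃ p₁ ≥ (1 : ℝ), ∀ p ≥ p₁, ∀ x : EuclideanSpace ℝ (Fin d),
      ENNReal.ofReal (ψ p / 2) * Fp1 d α F 1 x ≤ Fp1 d α F p x := by
  obtain ⟨N, hN⟩ : ∃ N : ℝ, ∀ p ≥ N, (1:ℝ) ≤ ψ p :=
    (hψtop.eventually_ge_atTop 1).exists_forall_of_atTop
  refine ⟨max 1 (max p₀ N), le_max_left _ _, ?_⟩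
  intro p hp x
  have hp1 : (1:ℝ) ≤ p := le_trans (le_max_left _ _) hp
  have hpp₀ : p₀ ≤ p := le_trans (le_trans (le_max_left _ _) (le_max_right _ _)) hp
  have hpN : N ≤ p := le_trans (le_trans (le_max_right _ _) (le_max_right _ _)) hp
  have hψ1 : (1:ℝ) ≤ ψ p := hN p hpN
  have hψp : (0:ℝ) < ψ p := hψpos p hp1
  have hφnn : ∀ r : ℝ, 0 ≤ r → 0 ≤ φ r := fun r hr => hφ0 r hr
  by_cases hx : ‖x‖ < R + R'
  swap
  · -- trivial case : F x · ≡ 0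
    have hF0 : ∀ y, F x y = 0 := by
      intro y
      have h1 : ¬ ‖x‖ < R := fun h => hx (by linarith)
      have h3 : ¬ (‖x‖ < R + R' ∧ ¬ ‖x‖ < R) := fun h => hx h.1
      have hterm2 : (if ‖x - y‖ < R' then (1:ℝ) else 0) * (if ‖y‖ < R then (1:ℝ) else 0)
          = 0 := by
        by_cases hxy : ‖x - y‖ < R'
        · by_cases hy : ‖y‖ < R
          · exfalso
            apply hx
            calc ‖x‖ = ‖(x - y) + y‖ := by rw [sub_add_cancel]
              _ ≤ ‖x - y‖ + ‖y‖ := norm_add_le _ _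
              _ < R' + R := by linarith
              _ = R + R' := by ring
          · simp [hy]
        · simp [hxy]
      rw [hFdef, hterm2, if_neg h1, if_neg h3]
      ring
    have hzero : ∀ q : ℝ, Fp1 d α F q x = 0 := by
      intro q
      rw [Fp1]
      have : ∀ y : EuclideanSpace ℝ (Fin d),
          ENNReal.ofReal ((1 - Real.exp (-(q * F x y))) * ‖x - y‖ ^ (-((d : ℝ) + α))) = 0 := by
        intro y; rw [hF0 y]; simp
      rw [lintegral_congr this]
      simp
    rw [hzero p, hzero 1]
    simp
  -- main case
  have hφcont : ContinuousOn φ (Set.Ici (0:ℝ)) := hφC1.continuousOn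
  have hnormc : Continuous fun y : EuclideanSpace ℝ (Fin d) => ‖x - y‖ :=
    (continuous_const.sub continuous_id).norm
  have hΦc : Continuous fun y : EuclideanSpace ℝ (Fin d) => φ ‖x - y‖ :=
    hφcont.comp_continuous hnormc fun y => norm_nonneg _
  set S : Set (EuclideanSpace ℝ (Fin d)) := Metric.ball x R' ∩ Metric.ball 0 (R + R')
    with hSdef
  have hxS : x ∈ S := ⟨Metric.mem_ball_self hR', by simpa [mem_ball_zero_iff] using hx⟩
  have hSconv : Convex ℝ S := (convex_ball x R').inter (convex_ball 0 (R+R'))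
  have hSmeas : MeasurableSet S :=
    (Metric.isOpen_ball.inter Metric.isOpen_ball).measurableSet
  set w : EuclideanSpace ℝ (Fin d) → ℝ≥0∞ :=
    fun y => ENNReal.ofReal (‖x - y‖ ^ (-((d:ℝ) + α))) with hwdef
  have hw : Measurable w :=
    ((hnormc.measurable).pow measurable_const).ennreal_ofReal
  -- bounds on F
  have hFS : ∀ y ∈ S, φ ‖x - y‖ / 2 ≤ F x y ∧ F x y ≤ φ ‖x - y‖ := by
    intro y hy
    have hyx : ‖y - x‖ < R' := mem_ball_iff_norm.mp hy.1
    have hxy : ‖x - y‖ < R' := by rw [norm_sub_rev]; exact hyx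
    have hyR : ‖y‖ < R + R' := mem_ball_zero_iff.mp hy.2
    have hφy : 0 ≤ φ ‖x - y‖ := hφnn _ (norm_nonneg _)
    rw [hFdef]
    by_cases h1 : ‖x‖ < R
    · have h3x : ¬(‖x‖ < R + R' ∧ ¬‖x‖ < R) := fun h => h.2 h1
      rw [if_pos hyx, if_pos hxy, if_pos h1, if_neg h3x]
      by_cases h2 : ‖y‖ < R
      · rw [if_pos h2]; constructor <;> (ring_nf; linarith)
      · rw [if_neg h2]; constructor <;> (ring_nf; linarith)
    · rw [if_neg h1, if_pos hyx, if_pos hxy]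
      by_cases h2 : ‖y‖ < R
      · have h3y : ¬(‖y‖ < R + R' ∧ ¬‖y‖ < R) := fun h => h.2 h2
        rw [if_pos h2, if_neg h3y]
        constructor <;> (ring_nf; linarith)
      · rw [if_neg h2, if_pos (show ‖x‖ < R + R' ∧ ¬‖x‖ < R from ⟨hx, h1⟩),
          if_pos (show ‖y‖ < R + R' ∧ ¬‖y‖ < R from ⟨hyR, h2⟩)]
        constructor <;> (ring_nf; linarith)
  have hFS0 : ∀ y, y ∉ S → F x y = 0 := by
    intro y hy
    rw [hSdef, Set.mem_inter_iff, not_and_or] at hy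
    rcases hy with hy | hy
    · have hyx : ¬ ‖y - x‖ < R' := by
        intro h; exact hy (mem_ball_iff_norm.mpr h)
      have hxy : ¬ ‖x - y‖ < R' := by rw [norm_sub_rev]; exact hyx
      rw [hFdef, if_neg hyx, if_neg hxy]; ring
    · have hyn : ¬ ‖y‖ < R + R' := by
        intro h; exact hy (mem_ball_zero_iff.mpr h)
      have h2 : ¬ ‖y‖ < R := fun h => hyn (by linarith)
      have h3 : ¬ (‖y‖ < R + R' ∧ ¬ ‖y‖ < R) := fun h => hyn h.1
      by_cases hyx : ‖y - x‖ < R'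
      · have h1 : ¬ ‖x‖ < R := by
          intro h1
          apply hyn
          calc ‖y‖ = ‖(y - x) + x‖ := by rw [sub_add_cancel]
            _ ≤ ‖y - x‖ + ‖x‖ := norm_add_le _ _
            _ < R' + R := by linarith
            _ = R + R' := by ring
        rw [hFdef, if_neg h1, if_neg h2, if_neg h3]; ring
      · have hxy : ¬ ‖x - y‖ < R' := by rw [norm_sub_rev]; exact hyx
        rw [hFdef, if_neg hyx, if_neg hxy]; ring
  have hFnn : ∀ y, 0 ≤ F x y := by
    intro y
    by_cases hy : y ∈ S
    · have := (hFS y hy).1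
      have := hφnn ‖x - y‖ (norm_nonneg _)
      linarith
    · rw [hFS0 y hy]
  -- the truncated potentials
  set K : ℝ → ℝ≥0∞ := fun q =>
    ∫⁻ y in S, ENNReal.ofReal (1 - Real.exp (-(q * (φ ‖x - y‖ / 2)))) * w y with hKdef
  have hmonoM : ∀ {A B : Set (EuclideanSpace ℝ (Fin d))}, A ⊆ B →
      (∫⁻ y in A, w y) ≤ ∫⁻ y in B, w y := by
    intro A B hAB
    exact lintegral_mono' (Measure.restrict_mono hAB le_rfl) le_rfl
  -- pointwise comparison lemmas
  have hA : K p ≤ ∫⁻ y, ENNReal.ofReal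
      ((1 - Real.exp (-(p * F x y))) * ‖x - y‖ ^ (-((d:ℝ) + α))) := by
    simp only [hKdef]
    rw [← lintegral_indicator hSmeas]
    apply lintegral_mono
    intro y
    show _ ≤ ENNReal.ofReal ((1 - Real.exp (-(p * F x y))) * ‖x - y‖ ^ (-((d:ℝ) + α)))
    by_cases hy : y ∈ S
    · rw [Set.indicator_of_mem hy]
      have hFy := hFS y hy
      have hpF : (0:ℝ) ≤ p * F x y := mul_nonneg (by linarith) (hFnn y)
      have h1 : (0:ℝ) ≤ 1 - Real.exp (-(p * F x y)) := by
        have : Real.exp (-(p * F x y)) ≤ Real.exp 0 :=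
          Real.exp_le_exp.mpr (by linarith)
        rw [Real.exp_zero] at this; linarith
      rw [ENNReal.ofReal_mul h1]
      apply mul_le_mul_left
      apply ENNReal.ofReal_le_ofReal
      have : Real.exp (-(p * F x y)) ≤ Real.exp (-(p * (φ ‖x - y‖ / 2))) :=
        Real.exp_le_exp.mpr (by nlinarith [hFy.1])
      linarith
    · rw [Set.indicator_of_notMem hy]
      exact zero_le
  have hB : (∫⁻ y, ENNReal.ofReal
      ((1 - Real.exp (-(1 * F x y))) * ‖x - y‖ ^ (-((d:ℝ) + α)))) ≤ 2 * K 1 := by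
    have h2K : 2 * K 1 = ∫⁻ y, S.indicator
        (fun y => 2 * (ENNReal.ofReal (1 - Real.exp (-(1 * (φ ‖x - y‖ / 2)))) * w y)) y := by
      simp only [hKdef]
      rw [lintegral_indicator hSmeas]
      exact (lintegral_const_mul' 2 _ (by norm_num)).symm
    rw [h2K]
    apply lintegral_mono
    intro y
    show ENNReal.ofReal ((1 - Real.exp (-(1 * F x y))) * ‖x - y‖ ^ (-((d:ℝ) + α))) ≤ _
    by_cases hy : y ∈ S
    · rw [Set.indicator_of_mem hy]
      have hFy := hFS y hy
      have hφy : 0 ≤ φ ‖x - y‖ := hφnn _ (norm_nonneg _)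
      have h1 : (0:ℝ) ≤ 1 - Real.exp (-(1 * F x y)) := by
        have : Real.exp (-(1 * F x y)) ≤ Real.exp 0 :=
          Real.exp_le_exp.mpr (by nlinarith [hFnn y])
        rw [Real.exp_zero] at this; linarith
      have key : (1 - Real.exp (-(1 * F x y)))
          ≤ 2 * (1 - Real.exp (-(1 * (φ ‖x - y‖ / 2)))) := by
        simp only [one_mul]
        have e1 : Real.exp (-(φ ‖x - y‖)) =
            Real.exp (-(φ ‖x - y‖ / 2)) * Real.exp (-(φ ‖x - y‖ / 2)) := by
          rw [← Real.exp_add]; ring_nf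
        have e2 : Real.exp (-(φ ‖x - y‖)) ≤ Real.exp (-(F x y)) :=
          Real.exp_le_exp.mpr (by linarith [hFy.2])
        have e3 := Real.exp_pos (-(φ ‖x - y‖ / 2))
        nlinarith [sq_nonneg (Real.exp (-(φ ‖x - y‖ / 2)) - 1)]
      calc ENNReal.ofReal ((1 - Real.exp (-(1 * F x y))) * ‖x - y‖ ^ (-((d:ℝ) + α)))
          = ENNReal.ofReal (1 - Real.exp (-(1 * F x y))) * w y := by
            rw [ENNReal.ofReal_mul h1]
        _ ≤ ENNReal.ofReal (2 * (1 - Real.exp (-(1 * (φ ‖x - y‖ / 2))))) * w y :=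
            mul_le_mul_left (ENNReal.ofReal_le_ofReal key) _
        _ = 2 * (ENNReal.ofReal (1 - Real.exp (-(1 * (φ ‖x - y‖ / 2)))) * w y) := by
            rw [ENNReal.ofReal_mul (by norm_num : (0:ℝ) ≤ 2)]
            rw [ENNReal.ofReal_ofNat, mul_assoc]
    · rw [Set.indicator_of_notMem hy, hFS0 y hy]
      simp
  -- the core superlevel-set estimate
  have hcore : ∀ s : ℝ, 0 < s →
      ENNReal.ofReal (ψ p) * (∫⁻ y in {y | s < 1 * (φ ‖x - y‖ / 2)} ∩ S, w y)
        ≤ ∫⁻ y in {y | s < p * (φ ‖x - y‖ / 2)} ∩ S, w y := by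
    intro s hs
    by_cases hex : ∃ r ≥ (0:ℝ), 2 * s < φ r
    · obtain ⟨r₂, hr₂0, hr₂⟩ := hex
      have hIcc : ContinuousOn φ (Set.Icc 0 r₂) := hφcont.mono Set.Icc_subset_Ici_self
      have hmem1 : 2 * s ∈ Set.Icc (φ 0) (φ r₂) := ⟨by rw [hφzero]; linarith, hr₂.le⟩
      obtain ⟨a, haI, ha⟩ := intermediate_value_Icc hr₂0 hIcc hmem1
      have h2sp : 2 * s / p ≤ 2 * s := div_le_self (by linarith) hp1
      have hmem2 : 2 * s / p ∈ Set.Icc (φ 0) (φ r₂) :=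
        ⟨by rw [hφzero]; positivity, by linarith⟩
      obtain ⟨b, hbI, hb⟩ := intermediate_value_Icc hr₂0 hIcc hmem2
      have ha0 : (0:ℝ) ≤ a := haI.1
      have hb0 : (0:ℝ) ≤ b := hbI.1
      have hinva : φinv (2*s) = a := by rw [← ha]; exact hinv1 a ha0
      have hinvb : φinv ((2*s)/p) = b := by rw [← hb]; exact hinv1 b hb0
      have hyp := hphiinv p hpp₀ (2*s) (by linarith) ⟨r₂, hr₂0, hr₂⟩
      rw [hinva, hinvb] at hyp
      set l : ℝ := (ψ p) ^ (-α⁻¹) with hldef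
      have hl0 : (0:ℝ) < l := Real.rpow_pos_of_pos hψp _
      have hl1 : l ≤ 1 :=
        Real.rpow_le_one_of_one_le_of_nonpos hψ1 (neg_nonpos.mpr (inv_nonneg.mpr hα0.le))
      have hlα : l ^ α = (ψ p)⁻¹ := by
        rw [hldef, ← Real.rpow_mul hψp.le]
        rw [show -α⁻¹ * α = -1 by field_simp, Real.rpow_neg_one]
      have hble : b ≤ l * a := by
        by_contra hcon
        push_neg at hcon
        have h1 : (l * a) ^ α < b ^ α :=
          Real.rpow_lt_rpow (by positivity) hcon hα0
        rw [Real.mul_rpow hl0.le ha0, hlα] at h1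
        linarith
      have hsub1 : {y | s < 1 * (φ ‖x - y‖ / 2)} ∩ S ⊆ {y | a < ‖x - y‖} ∩ S := by
        rintro y ⟨hy1, hy2⟩
        refine ⟨?_, hy2⟩
        simp only [Set.mem_setOf_eq, one_mul] at hy1 ⊢
        by_contra hcon
        push_neg at hcon
        have := hφmono.monotoneOn (Set.mem_Ici.2 (norm_nonneg _)) (Set.mem_Ici.2 ha0) hcon
        rw [ha] at this
        linarith
      have hsub2 : {y | l * a < ‖x - y‖} ∩ S ⊆ {y | s < p * (φ ‖x - y‖ / 2)} ∩ S := by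
        rintro y ⟨hy1, hy2⟩
        refine ⟨?_, hy2⟩
        simp only [Set.mem_setOf_eq] at hy1 ⊢
        have hblt : b < ‖x - y‖ := lt_of_le_of_lt hble hy1
        have h1 : φ b < φ ‖x - y‖ :=
          hφmono (Set.mem_Ici.2 hb0) (Set.mem_Ici.2 (norm_nonneg _)) hblt
        rw [hb] at h1
        have hp0 : (0:ℝ) < p := by linarith
        rw [div_lt_iff₀ hp0] at h1
        nlinarith
      have hAmeas : MeasurableSet ({y : EuclideanSpace ℝ (Fin d) | a < ‖x - y‖} ∩ S) :=
        ((isOpen_lt continuous_const hnormc).measurableSet).inter hSmeas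
      have hBmeas : MeasurableSet ({y : EuclideanSpace ℝ (Fin d) | l * a < ‖x - y‖} ∩ S) :=
        ((isOpen_lt continuous_const hnormc).measurableSet).inter hSmeas
      have hscale : ENNReal.ofReal (ψ p) * (∫⁻ y in {y | a < ‖x - y‖} ∩ S, w y)
          ≤ ∫⁻ y in {y | l * a < ‖x - y‖} ∩ S, w y := by
        have hgmeas : Measurable (({y : EuclideanSpace ℝ (Fin d) | l * a < ‖x - y‖} ∩ S).indicator w) :=
          hw.indicator hBmeas
        have h0 := scale_aux d x hl0 _ hgmeas
        have hkey : ∀ z : EuclideanSpace ℝ (Fin d),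
            ENNReal.ofReal (ψ p) * ({y | a < ‖x - y‖} ∩ S).indicator w z
              ≤ ENNReal.ofReal (l ^ d) *
                (({y | l * a < ‖x - y‖} ∩ S).indicator w (x + l • (z - x))) := by
          intro z
          by_cases hz : z ∈ {y | a < ‖x - y‖} ∩ S
          · rw [Set.indicator_of_mem hz]
            have hnormz : ‖x - (x + l • (z - x))‖ = l * ‖x - z‖ := by
              have e : x - (x + l • (z - x)) = -(l • (z - x)) := by abel
              rw [e, norm_neg, norm_smul, Real.norm_eq_abs, abs_of_pos hl0, norm_sub_rev]
            have hTz : (x + l • (z - x)) ∈ {y | l * a < ‖x - y‖} ∩ S := by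
              constructor
              · show l * a < ‖x - (x + l • (z - x))‖
                rw [hnormz]
                exact (mul_lt_mul_iff_right₀ hl0).mpr hz.1
              · have hxx : x + l • (z - x) = (1 - l) • x + l • z := by
                  rw [smul_sub, sub_smul, one_smul]; abel
                rw [hxx]
                exact hSconv hxS hz.2 (by linarith) hl0.le (by ring)
            rw [Set.indicator_of_mem hTz]
            have e1 : (l * ‖x - z‖) ^ (-((d:ℝ) + α))
                = l ^ (-((d:ℝ) + α)) * ‖x - z‖ ^ (-((d:ℝ) + α)) :=
              Real.mul_rpow hl0.le (norm_nonneg _)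
            have e2 : (l:ℝ) ^ (d:ℕ) * l ^ (-((d:ℝ) + α)) = ψ p := by
              rw [← Real.rpow_natCast l d, ← Real.rpow_add hl0]
              rw [show (d:ℝ) + -((d:ℝ) + α) = -α by ring, hldef,
                ← Real.rpow_mul hψp.le]
              rw [show -α⁻¹ * -α = 1 by field_simp, Real.rpow_one]
            apply le_of_eq
            calc ENNReal.ofReal (ψ p) * w z
                = ENNReal.ofReal ((l:ℝ) ^ (d:ℕ) * l ^ (-((d:ℝ) + α))) * w z := by rw [e2]
              _ = ENNReal.ofReal (l ^ d) * (ENNReal.ofReal (l ^ (-((d:ℝ) + α))) * w z) := by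
                  rw [ENNReal.ofReal_mul (pow_nonneg hl0.le _), mul_assoc]
              _ = ENNReal.ofReal (l ^ d) * w (x + l • (z - x)) := by
                  congr 1
                  rw [hwdef]
                  simp only []
                  rw [hnormz, e1, ENNReal.ofReal_mul (Real.rpow_nonneg hl0.le _)]
          · rw [Set.indicator_of_notMem hz, mul_zero]
            exact zero_le
        calc ENNReal.ofReal (ψ p) * (∫⁻ y in {y | a < ‖x - y‖} ∩ S, w y)
            = ENNReal.ofReal (ψ p) *
              ∫⁻ z, ({y | a < ‖x - y‖} ∩ S).indicator w z := by
              rw [lintegral_indicator hAmeas]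
          _ = ∫⁻ z, ENNReal.ofReal (ψ p) * ({y | a < ‖x - y‖} ∩ S).indicator w z :=
              (lintegral_const_mul' _ _ ENNReal.ofReal_ne_top).symm
          _ ≤ ∫⁻ z, ENNReal.ofReal (l ^ d) *
                (({y | l * a < ‖x - y‖} ∩ S).indicator w (x + l • (z - x))) :=
              lintegral_mono hkey
          _ = ENNReal.ofReal (l ^ d) *
                ∫⁻ z, ({y | l * a < ‖x - y‖} ∩ S).indicator w (x + l • (z - x)) :=
              lintegral_const_mul' _ _ ENNReal.ofReal_ne_top
          _ = ∫⁻ y, ({y | l * a < ‖x - y‖} ∩ S).indicator w y := h0.symm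
          _ = ∫⁻ y in {y | l * a < ‖x - y‖} ∩ S, w y := lintegral_indicator hBmeas _
      calc ENNReal.ofReal (ψ p) * (∫⁻ y in {y | s < 1 * (φ ‖x - y‖ / 2)} ∩ S, w y)
          ≤ ENNReal.ofReal (ψ p) * (∫⁻ y in {y | a < ‖x - y‖} ∩ S, w y) :=
            mul_le_mul_right (hmonoM hsub1) _
        _ ≤ ∫⁻ y in {y | l * a < ‖x - y‖} ∩ S, w y := hscale
        _ ≤ ∫⁻ y in {y | s < p * (φ ‖x - y‖ / 2)} ∩ S, w y := hmonoM hsub2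
    · push_neg at hex
      have hempty : {y : EuclideanSpace ℝ (Fin d) | s < 1 * (φ ‖x - y‖ / 2)} ∩ S = ∅ := by
        ext y
        simp only [Set.mem_inter_iff, Set.mem_setOf_eq, Set.mem_empty_iff_false, iff_false,
          not_and, one_mul]
        intro hy1
        exfalso
        have := hex ‖x - y‖ (norm_nonneg _)
        linarith
      rw [hempty]
      simp
  -- layer-cake representation of K q
  have hKrepr : ∀ q : ℝ, 0 < q → K q = ∫⁻ s in Set.Ioi (0:ℝ),
      ENNReal.ofReal (Real.exp (-s)) *
        ∫⁻ y in {y | s < q * (φ ‖x - y‖ / 2)} ∩ S, w y := by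
    intro q hq
    set H : EuclideanSpace ℝ (Fin d) × ℝ → ℝ≥0∞ := fun z =>
      Set.indicator {z : EuclideanSpace ℝ (Fin d) × ℝ | z.2 < q * (φ ‖x - z.1‖ / 2)}
        (fun z => ENNReal.ofReal (Real.exp (-z.2)) * w z.1) z with hHdef
    have hcq : Continuous fun z : EuclideanSpace ℝ (Fin d) × ℝ =>
        q * (φ ‖x - z.1‖ / 2) := continuous_const.mul ((hΦc.comp continuous_fst).div_const 2)
    have hHmeas : Measurable H := by
      apply Measurable.indicator
      · exact ((Real.continuous_exp.comp continuous_neg).measurable.comp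
          measurable_snd).ennreal_ofReal.mul (hw.comp measurable_fst)
      · exact measurableSet_lt measurable_snd hcq.measurable
    have hlvlmeas : ∀ s : ℝ, MeasurableSet {y : EuclideanSpace ℝ (Fin d) |
        s < q * (φ ‖x - y‖ / 2)} :=
      fun s => (isOpen_lt continuous_const
        (continuous_const.mul (hΦc.div_const 2))).measurableSet
    have hper_y : ∀ y : EuclideanSpace ℝ (Fin d),
        (∫⁻ s in Set.Ioi (0:ℝ), H (y, s))
          = ENNReal.ofReal (1 - Real.exp (-(q * (φ ‖x - y‖ / 2)))) * w y := by
      intro y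
      have h1 : ∀ s : ℝ, H (y, s) = (Set.Iio (q * (φ ‖x - y‖ / 2))).indicator
          (fun s => ENNReal.ofReal (Real.exp (-s))) s * w y := by
        intro s
        by_cases hsy : s < q * (φ ‖x - y‖ / 2)
        · simp [hHdef, Set.indicator_apply, Set.mem_setOf_eq, Set.mem_Iio, hsy]
        · simp [hHdef, Set.indicator_apply, Set.mem_setOf_eq, Set.mem_Iio, hsy]
      rw [lintegral_congr h1, lintegral_mul_const' _ _ ENNReal.ofReal_ne_top,
        layer_aux (by
          have := hφnn ‖x - y‖ (norm_nonneg _)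
          positivity)]
    have hper_s : ∀ s : ℝ, (∫⁻ y in S, H (y, s))
        = ENNReal.ofReal (Real.exp (-s)) *
          ∫⁻ y in {y | s < q * (φ ‖x - y‖ / 2)} ∩ S, w y := by
      intro s
      have h1 : ∀ y : EuclideanSpace ℝ (Fin d), H (y, s)
          = ({y : EuclideanSpace ℝ (Fin d) | s < q * (φ ‖x - y‖ / 2)}).indicator
              (fun y => ENNReal.ofReal (Real.exp (-s)) * w y) y := by
        intro y
        by_cases hsy : s < q * (φ ‖x - y‖ / 2)
        · simp [hHdef, Set.indicator_apply, Set.mem_setOf_eq, hsy]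
        · simp [hHdef, Set.indicator_apply, Set.mem_setOf_eq, hsy]
      rw [lintegral_congr h1, lintegral_indicator (hlvlmeas s),
        Measure.restrict_restrict (hlvlmeas s),
        lintegral_const_mul' _ _ ENNReal.ofReal_ne_top]
    calc K q = ∫⁻ y in S, ∫⁻ s in Set.Ioi (0:ℝ), H (y, s) := by
          simp only [hKdef]
          exact (lintegral_congr fun y => hper_y y).symm
      _ = ∫⁻ s in Set.Ioi (0:ℝ), ∫⁻ y in S, H (y, s) := by
          apply lintegral_lintegral_swap
          have : Function.uncurry (fun y s => H (y, s)) = H := by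
            funext z
            simp [Function.uncurry]
          rw [this]
          exact hHmeas.aemeasurable
      _ = _ := lintegral_congr fun s => hper_s s
  -- combining: ψ(p) · K 1 ≤ K p
  have hKK : ENNReal.ofReal (ψ p) * K 1 ≤ K p := by
    rw [hKrepr 1 one_pos, hKrepr p (by linarith)]
    rw [← lintegral_const_mul' _ _ ENNReal.ofReal_ne_top]
    apply lintegral_mono_ae
    refine (ae_restrict_iff' measurableSet_Ioi).2 (Filter.Eventually.of_forall fun s hs => ?_)
    calc ENNReal.ofReal (ψ p) * (ENNReal.ofReal (Real.exp (-s)) *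
          ∫⁻ y in {y | s < 1 * (φ ‖x - y‖ / 2)} ∩ S, w y)
        = ENNReal.ofReal (Real.exp (-s)) * (ENNReal.ofReal (ψ p) *
          ∫⁻ y in {y | s < 1 * (φ ‖x - y‖ / 2)} ∩ S, w y) := by ring
      _ ≤ ENNReal.ofReal (Real.exp (-s)) *
          ∫⁻ y in {y | s < p * (φ ‖x - y‖ / 2)} ∩ S, w y :=
          mul_le_mul_right (hcore s hs) _
  -- final assembly
  rw [Fp1, Fp1, mul_left_comm]
  apply mul_le_mul_right
  calc ENNReal.ofReal (ψ p / 2) *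
        ∫⁻ y, ENNReal.ofReal ((1 - Real.exp (-(1 * F x y))) * ‖x - y‖ ^ (-((d:ℝ) + α)))
      ≤ ENNReal.ofReal (ψ p / 2) * (2 * K 1) := mul_le_mul_right hB _
    _ = ENNReal.ofReal (ψ p) * K 1 := by
        rw [← mul_assoc]
        congr 1
        rw [← ENNReal.ofReal_ofNat 2, ← ENNReal.ofReal_mul (by linarith)]
        congr 1
        ring
    _ ≤ K p := hKK
    _ ≤ _ := hA
end
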